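/- (Algebraic form of the sign theorem.) Identify ℝ³ with the pure imaginary quaternions. Let N ≥ 1, let a₀,…,a_N be distinct pure imaginary quaternions, λ₀,…,λ_N > 0, μ > 0. Let f(x) = Σᵢ λᵢ² log‖x − aᵢ‖, ζ = ∇f, and let ι̃ : ℝ³ ∖ {a₀,…,a_N} → ℝ³ send x to the imaginary part of Ψ(μ)(x)·conj(ζ(x)) (regarded as a vector in ℝ³), where Ψ(μ)(x) = Σᵢ,ⱼ λᵢ²λⱼ² (x − aᵢ + μ)·conj(x − aⱼ + μ)·(x − aⱼ)/(‖x − aᵢ + μ‖²‖x − aⱼ + μ‖²‖x − aⱼ‖²). If x* is a non-degenerate critical point of f (i.e. ζ(x*) = 0 and det Hf(x*) ≠ 0), then the sign of the determinant of the total derivative of ι̃ at x* equals minus the sign of det(Hf(x*)); in particular the derivative of ι̃ at x* is invertible. -/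

import Mathlib

set_option maxHeartbeats 1000000


/-- The pure imaginary quaternion corresponding to a vector in `ℝ³`. -/
def quatOfVec (y : Fin 3 → ℝ) : Quaternion ℝ := ⟨0, y 0, y 1, y 2⟩

/-- The vector in `ℝ³` formed by the imaginary part of a quaternion. -/
def imVec (q : Quaternion ℝ) : Fin 3 → ℝ := ![q.imI, q.imJ, q.imK]

/-- The JNR function `ζ(x) = Σᵢ λᵢ² (x − aᵢ)/‖x − aᵢ‖²` (the gradient of
`f(x) = Σᵢ λᵢ² log‖x − aᵢ‖`), quaternion-valued. -/
noncomputable def jnrZeta (N : ℕ) (a : Fin (N + 1) → Quaternion ℝ)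
    (lam : Fin (N + 1) → ℝ) (x : Quaternion ℝ) : Quaternion ℝ :=
  ∑ i, ((lam i) ^ 2 / ‖x - a i‖ ^ 2) • (x - a i)

/-- `ζ = ∇f` as a map `ℝ³ → ℝ³` on pure imaginary quaternions; its derivative is the
Hessian `Hf` of `f`. -/
noncomputable def jnrZetaVec (N : ℕ) (a : Fin (N + 1) → Quaternion ℝ)
    (lam : Fin (N + 1) → ℝ) (y : Fin 3 → ℝ) : Fin 3 → ℝ :=
  imVec (jnrZeta N a lam (quatOfVec y))

/-- `Ψ(μ)(x) = Σᵢⱼ λᵢ²λⱼ² (x − aᵢ + μ)·conj(x − aⱼ + μ)·(x − aⱼ)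
/(‖x − aᵢ + μ‖²‖x − aⱼ + μ‖²‖x − aⱼ‖²)`, with quaternion products. -/
noncomputable def jnrPsi (N : ℕ) (a : Fin (N + 1) → Quaternion ℝ)
    (lam : Fin (N + 1) → ℝ) (μ : ℝ) (x : Quaternion ℝ) : Quaternion ℝ :=
  ∑ i, ∑ j,
    ((lam i) ^ 2 * (lam j) ^ 2 /
        (‖x - a i + (μ : Quaternion ℝ)‖ ^ 2 * ‖x - a j + (μ : Quaternion ℝ)‖ ^ 2 *
          ‖x - a j‖ ^ 2)) •
      ((x - a i + (μ : Quaternion ℝ)) * star (x - a j + (μ : Quaternion ℝ)) * (x - a j))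

/-- `ι̃ : ℝ³ → ℝ³`, `x ↦ Im(Ψ(μ)(x)·conj(ζ(x)))` regarded as a vector in `ℝ³`. -/
noncomputable def jnrIota (N : ℕ) (a : Fin (N + 1) → Quaternion ℝ)
    (lam : Fin (N + 1) → ℝ) (μ : ℝ) (y : Fin 3 → ℝ) : Fin 3 → ℝ :=
  imVec (jnrPsi N a lam μ (quatOfVec y) * star (jnrZeta N a lam (quatOfVec y)))

/-- The Hessian `Hf` of `f(x) = Σᵢ λᵢ² log‖x − aᵢ‖`, i.e. the derivative of `ζ = ∇f`. -/
noncomputable def jnrHess (N : ℕ) (a : Fin (N + 1) → Quaternion ℝ)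
    (lam : Fin (N + 1) → ℝ) (y : Fin 3 → ℝ) : (Fin 3 → ℝ) →L[ℝ] (Fin 3 → ℝ) :=
  fderiv ℝ (jnrZetaVec N a lam) y

/-! ### Auxiliary constructions and lemmas -/

/-- `quatOfVec` as a continuous linear map. -/
noncomputable def quatCLM : (Fin 3 → ℝ) →L[ℝ] Quaternion ℝ :=
  LinearMap.toContinuousLinearMap
    { toFun := quatOfVec
      map_add' := by intro y z; ext <;> simp [Quaternion.re_add, Quaternion.imI_add, Quaternion.imJ_add, Quaternion.imK_add] <;> simp [quatOfVec]
      map_smul' := by intro c y; ext <;> simp [Quaternion.re_smul, Quaternion.imI_smul, Quaternion.imJ_smul, Quaternion.imK_smul] <;> simp [quatOfVec] }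

/-- `imVec` as a continuous linear map. -/
noncomputable def imCLM : Quaternion ℝ →L[ℝ] (Fin 3 → ℝ) :=
  LinearMap.toContinuousLinearMap
    { toFun := imVec
      map_add' := by intro y z; funext i; fin_cases i <;> simp [imVec]
      map_smul' := by intro c y; funext i; fin_cases i <;> simp [imVec] }

@[simp] lemma quatCLM_apply (y : Fin 3 → ℝ) : quatCLM y = quatOfVec y := rfl
@[simp] lemma imCLM_apply (q : Quaternion ℝ) : imCLM q = imVec q := rfl
@[simp] lemma quatOfVec_re (y : Fin 3 → ℝ) : (quatOfVec y).re = 0 := rfl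

@[simp] lemma imVec_quatOfVec (y : Fin 3 → ℝ) : imVec (quatOfVec y) = y := by
  funext i; fin_cases i <;> rfl

lemma quatOfVec_imVec {q : Quaternion ℝ} (h : q.re = 0) : quatOfVec (imVec q) = q := by
  ext <;> simp [quatOfVec, imVec, h]

/-- `star` on quaternions as a continuous `ℝ`-linear map. -/
noncomputable def starCLMQ : Quaternion ℝ →L[ℝ] Quaternion ℝ :=
  LinearMap.toContinuousLinearMap
    { toFun := star
      map_add' := star_add
      map_smul' := by intro c q; ext <;> simp }

@[simp] lemma starCLMQ_apply (q : Quaternion ℝ) : starCLMQ q = star q := rfl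

instance : StarModule ℝ (Quaternion ℝ) := ⟨fun r q => by ext <;> simp⟩

lemma quat_star_smul (r : ℝ) (q : Quaternion ℝ) : star (r • q) = r • star q := by
  ext <;> simp

lemma quat_star_eq_neg {q : Quaternion ℝ} (h : q.re = 0) : star q = -q := by
  ext <;> simp [h]

lemma quat_coe_eq_smul_one (r : ℝ) : (r : Quaternion ℝ) = r • (1 : Quaternion ℝ) := by
  ext <;> simp [Quaternion.re_one, Quaternion.imI_one, Quaternion.imJ_one, Quaternion.imK_one]

lemma quat_normsq (q : Quaternion ℝ) : ‖q‖ ^ 2 = Quaternion.normSq q := by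
  rw [sq, ← Quaternion.normSq_eq_norm_mul_self]

lemma quat_mul_self_of_im (u : Quaternion ℝ) (h : u.re = 0) :
    u * u = -((‖u‖ ^ 2 : ℝ) : Quaternion ℝ) := by
  have h2 : star u * u = ((Quaternion.normSq u : ℝ) : Quaternion ℝ) := Quaternion.star_mul_self u
  rw [quat_star_eq_neg h, neg_mul] at h2
  rw [quat_normsq, ← h2, neg_neg]

lemma quat_normw (u : Quaternion ℝ) (h : u.re = 0) (μ : ℝ) :
    ‖u + (μ : Quaternion ℝ)‖ ^ 2 = μ ^ 2 + ‖u‖ ^ 2 := by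
  rw [quat_normsq, quat_normsq]; simp [Quaternion.normSq_def', h]; ring

lemma quat_re_sum {s : Finset (Fin (n + 1))} {f : Fin (n + 1) → Quaternion ℝ} :
    (∑ i ∈ s, f i).re = ∑ i ∈ s, (f i).re :=
  map_sum (AddMonoidHom.mk' (fun q : Quaternion ℝ => q.re) (by simp)) _ _

/-- The key termwise algebraic identity. -/
lemma jnr_term_id (u : Quaternion ℝ) (h : u.re = 0) (hu : u ≠ 0) (μ lam : ℝ) (hμ : 0 < μ) :
    μ • ((lam ^ 2 / (‖u + (μ : Quaternion ℝ)‖ ^ 2 * ‖u‖ ^ 2)) •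
        (star (u + (μ : Quaternion ℝ)) * u))
      = (lam ^ 2 / ‖u + (μ : Quaternion ℝ)‖ ^ 2) • star (u + (μ : Quaternion ℝ))
        + (lam ^ 2 / ‖u‖ ^ 2) • u := by
  have hn : (0 : ℝ) < ‖u‖ ^ 2 := pow_pos (norm_pos_iff.mpr hu) 2
  have hm : (0 : ℝ) < μ ^ 2 + ‖u‖ ^ 2 := by positivity
  have hsw : star (u + (μ : Quaternion ℝ)) = (μ : Quaternion ℝ) - u := by
    rw [star_add, quat_star_eq_neg h, Quaternion.star_coe, neg_add_eq_sub]
  have hmul : star (u + (μ : Quaternion ℝ)) * u = μ • u + ‖u‖ ^ 2 • (1 : Quaternion ℝ) := by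
    rw [hsw, sub_mul, quat_mul_self_of_im u h, Quaternion.coe_mul_eq_smul, sub_neg_eq_add,
      quat_coe_eq_smul_one]
  rw [quat_normw u h, hmul, hsw, quat_coe_eq_smul_one μ]
  match_scalars <;> field_simp <;> ring

/-- (Algebraic form of the sign theorem.) Let `N ≥ 1`, let `aᵢ` be
distinct pure imaginary poles, `λᵢ > 0`, `μ > 0`. If `x⁎` is a non-degenerate critical
point of `f` (i.e. `ζ(x⁎) = 0` and `det Hf(x⁎) ≠ 0`), then the sign of the determinant
of the total derivative of `ι̃` at `x⁎` equals minus the sign of `det Hf(x⁎)`; in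
particular the derivative of `ι̃` at `x⁎` is invertible. -/
theorem jnr_sign_det_deriv_iota (N : ℕ) (hN : 1 ≤ N)
    (a : Fin (N + 1) → Quaternion ℝ) (ha_im : ∀ i, (a i).re = 0)
    (ha : Function.Injective a)
    (lam : Fin (N + 1) → ℝ) (hlam : ∀ i, 0 < lam i)
    (μ : ℝ) (hμ : 0 < μ)
    (xs : Fin 3 → ℝ) (hxs : ∀ i, quatOfVec xs ≠ a i)
    (hzero : jnrZeta N a lam (quatOfVec xs) = 0)
    (hnondeg : LinearMap.det
        ((jnrHess N a lam xs : (Fin 3 → ℝ) →L[ℝ] (Fin 3 → ℝ)) :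
          (Fin 3 → ℝ) →ₗ[ℝ] (Fin 3 → ℝ)) ≠ 0) :
    Real.sign
        (LinearMap.det
          ((fderiv ℝ (jnrIota N a lam μ) xs : (Fin 3 → ℝ) →L[ℝ] (Fin 3 → ℝ)) :
            (Fin 3 → ℝ) →ₗ[ℝ] (Fin 3 → ℝ)))
      = -Real.sign
          (LinearMap.det
            ((jnrHess N a lam xs : (Fin 3 → ℝ) →L[ℝ] (Fin 3 → ℝ)) :
              (Fin 3 → ℝ) →ₗ[ℝ] (Fin 3 → ℝ)))
      ∧ LinearMap.det
          ((fderiv ℝ (jnrIota N a lam μ) xs : (Fin 3 → ℝ) →L[ℝ] (Fin 3 → ℝ)) :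
            (Fin 3 → ℝ) →ₗ[ℝ] (Fin 3 → ℝ)) ≠ 0 := by
  classical
  set X : Quaternion ℝ := quatOfVec xs with hX
  have hXre : X.re = 0 := rfl
  have hu_re : ∀ i, (X - a i).re = 0 := by
    intro i; simp [Quaternion.re_sub, hXre, ha_im i]
  have hu_ne : ∀ i, X - a i ≠ 0 := fun i => sub_ne_zero.mpr (hxs i)
  have hn_pos : ∀ i, (0 : ℝ) < ‖X - a i‖ ^ 2 := fun i => pow_pos (norm_pos_iff.mpr (hu_ne i)) 2
  have hm_pos : ∀ i, (0 : ℝ) < ‖X - a i + (μ : Quaternion ℝ)‖ ^ 2 := by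
    intro i; rw [quat_normw _ (hu_re i)]; positivity
  -- the quaternion C and the positive constant c
  set C : Quaternion ℝ :=
    ∑ i, ((lam i) ^ 2 / ‖X - a i + (μ : Quaternion ℝ)‖ ^ 2) •
      star (X - a i + (μ : Quaternion ℝ)) with hCdef
  have hCre : 0 < C.re := by
    rw [hCdef, quat_re_sum]
    refine Finset.sum_pos (fun i _ => ?_) ⟨0, Finset.mem_univ 0⟩
    have : (star (X - a i + (μ : Quaternion ℝ))).re = μ := by
      simp [Quaternion.re_star, Quaternion.re_add, Quaternion.re_sub, hXre, ha_im i]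
    rw [Quaternion.re_smul, this]
    have := hm_pos i
    have := hlam i
    positivity
  have hCne : C ≠ 0 := fun h => by rw [h] at hCre; simp [Quaternion.re_zero] at hCre
  set c : ℝ := ‖C‖ ^ 2 / μ with hc
  have hcpos : 0 < c := by
    have : (0:ℝ) < ‖C‖ ^ 2 := pow_pos (norm_pos_iff.mpr hCne) 2
    positivity
  -- Ψ(X) equals the real constant c
  have hPsi : jnrPsi N a lam μ X = ((c : ℝ) : Quaternion ℝ) := by
    have hfact : jnrPsi N a lam μ X =
        (∑ i, ((lam i) ^ 2 / ‖X - a i + (μ : Quaternion ℝ)‖ ^ 2) •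
            (X - a i + (μ : Quaternion ℝ))) *
        (∑ j, ((lam j) ^ 2 / (‖X - a j + (μ : Quaternion ℝ)‖ ^ 2 * ‖X - a j‖ ^ 2)) •
            (star (X - a j + (μ : Quaternion ℝ)) * (X - a j))) := by
      rw [jnrPsi, Finset.sum_mul_sum]
      refine Finset.sum_congr rfl fun i _ => Finset.sum_congr rfl fun j _ => ?_
      rw [smul_mul_smul_comm, ← mul_assoc]
      congr 1
      ring
    have hA : (∑ i, ((lam i) ^ 2 / ‖X - a i + (μ : Quaternion ℝ)‖ ^ 2) •
        (X - a i + (μ : Quaternion ℝ))) = star C := by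
      rw [hCdef, star_sum]
      refine Finset.sum_congr rfl fun i _ => ?_
      rw [quat_star_smul, star_star]
    have hμB : μ • (∑ j, ((lam j) ^ 2 / (‖X - a j + (μ : Quaternion ℝ)‖ ^ 2 * ‖X - a j‖ ^ 2)) •
        (star (X - a j + (μ : Quaternion ℝ)) * (X - a j))) = C := by
      rw [Finset.smul_sum]
      rw [Finset.sum_congr rfl fun j _ => jnr_term_id (X - a j) (hu_re j) (hu_ne j) μ (lam j) hμ]
      rw [Finset.sum_add_distrib]
      have hz : (∑ j, ((lam j) ^ 2 / ‖X - a j‖ ^ 2) • (X - a j)) = 0 := hzero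
      rw [hz, add_zero, hCdef]
    have hB : (∑ j, ((lam j) ^ 2 / (‖X - a j + (μ : Quaternion ℝ)‖ ^ 2 * ‖X - a j‖ ^ 2)) •
        (star (X - a j + (μ : Quaternion ℝ)) * (X - a j))) = μ⁻¹ • C := by
      rw [← hμB, inv_smul_smul₀ (ne_of_gt hμ)]
    rw [hfact, hA, hB, mul_smul_comm, Quaternion.star_mul_self, Quaternion.smul_coe]
    rw [hc, quat_normsq]
    norm_num [div_eq_inv_mul]
  -- differentiability of the pieces
  -- differentiability of the pieces
  have hquatCD : ContDiff ℝ 1 quatOfVec := by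
    have h1 : ⇑quatCLM = quatOfVec := funext fun y => quatCLM_apply y
    have h2 := quatCLM.contDiff (n := 1)
    rwa [h1] at h2
  have hquatDiff : Differentiable ℝ quatOfVec := hquatCD.differentiable one_ne_zero
  have hW : ∀ (i : Fin (N + 1)), Differentiable ℝ
      (fun y => quatOfVec y - a i + (μ : Quaternion ℝ)) :=
    fun i => (hquatDiff.sub_const _).add_const _
  have hU : ∀ (i : Fin (N + 1)), Differentiable ℝ (fun y => quatOfVec y - a i) :=
    fun i => hquatDiff.sub_const _
  have hnormW : ∀ (i : Fin (N + 1)), Differentiable ℝ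
      (fun y => ‖quatOfVec y - a i + (μ : Quaternion ℝ)‖ ^ 2) :=
    fun i => ((contDiff_norm_sq (𝕜 := ℝ) (n := 1)).comp
      ((hquatCD.sub contDiff_const).add contDiff_const)).differentiable one_ne_zero
  have hnormU : ∀ (i : Fin (N + 1)), Differentiable ℝ
      (fun y => ‖quatOfVec y - a i‖ ^ 2) :=
    fun i => ((contDiff_norm_sq (𝕜 := ℝ) (n := 1)).comp
      (hquatCD.sub contDiff_const)).differentiable one_ne_zero
  -- the map G = ζ ∘ quatOfVec and its derivative
  set G : (Fin 3 → ℝ) → Quaternion ℝ := fun y => jnrZeta N a lam (quatOfVec y) with hGdef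
  have hGexp : G = fun y => ∑ i, ((lam i) ^ 2 / ‖quatOfVec y - a i‖ ^ 2) •
      (quatOfVec y - a i) := rfl
  have hGdiff : DifferentiableAt ℝ G xs := by
    rw [hGexp]
    refine DifferentiableAt.fun_sum fun i _ => DifferentiableAt.fun_smul ?_ (hU i xs)
    simp only [div_eq_mul_inv]
    exact ((hnormU i xs).inv (ne_of_gt (hn_pos i))).const_mul _
  have hGre : ∀ y, (G y).re = 0 := by
    intro y
    rw [hGexp, quat_re_sum]
    refine Finset.sum_eq_zero fun i _ => ?_
    rw [Quaternion.re_smul]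
    simp [Quaternion.re_sub, ha_im i]
  have hZveq : jnrZetaVec N a lam = fun y => imCLM (G y) := rfl
  have hZvDiff : DifferentiableAt ℝ (jnrZetaVec N a lam) xs := by
    rw [hZveq]
    exact (imCLM.differentiableAt).comp xs hGdiff
  set H : (Fin 3 → ℝ) →L[ℝ] (Fin 3 → ℝ) := jnrHess N a lam xs with hHdef
  have hHFD : HasFDerivAt (jnrZetaVec N a lam) H xs := hZvDiff.hasFDerivAt
  have hGeq : G = fun y => quatCLM (jnrZetaVec N a lam y) := by
    funext y
    rw [quatCLM_apply]
    exact (quatOfVec_imVec (hGre y)).symm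
  have hGFD : HasFDerivAt G (quatCLM.comp H) xs := by
    rw [hGeq]
    exact (quatCLM.hasFDerivAt).comp xs hHFD
  have hstarG : HasFDerivAt (fun y => star (G y))
      (starCLMQ.comp (quatCLM.comp H)) xs := by
    have := (starCLMQ.hasFDerivAt (x := G xs)).comp xs hGFD
    exact this
  -- P = Ψ ∘ quatOfVec is differentiable
  set P : (Fin 3 → ℝ) → Quaternion ℝ := fun y => jnrPsi N a lam μ (quatOfVec y) with hPdef
  have hPexp : P = fun y => ∑ i, ∑ j,
      ((lam i) ^ 2 * (lam j) ^ 2 /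
        (‖quatOfVec y - a i + (μ : Quaternion ℝ)‖ ^ 2 *
          ‖quatOfVec y - a j + (μ : Quaternion ℝ)‖ ^ 2 * ‖quatOfVec y - a j‖ ^ 2)) •
      ((quatOfVec y - a i + (μ : Quaternion ℝ)) * star (quatOfVec y - a j + (μ : Quaternion ℝ))
        * (quatOfVec y - a j)) := rfl
  have hPdiff : DifferentiableAt ℝ P xs := by
    rw [hPexp]
    refine DifferentiableAt.fun_sum fun i _ => DifferentiableAt.fun_sum fun j _ =>
      DifferentiableAt.fun_smul ?_ ?_
    · simp only [div_eq_mul_inv]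
      exact ((((hnormW i xs).mul (hnormW j xs)).mul (hnormU j xs)).inv
        (ne_of_gt (mul_pos (mul_pos (hm_pos i) (hm_pos j)) (hn_pos j)))).const_mul _
    · exact ((hW i xs).mul ((hW j xs).star)).mul (hU j xs)
  -- derivative of the product, using ζ(x⁎) = 0
  have hGxs : G xs = 0 := hzero
  have hprodFD : HasFDerivAt (fun y => P y * star (G y))
      (P xs • (starCLMQ.comp (quatCLM.comp H))
        + (fderiv ℝ P xs).smulRight (star (G xs))) xs :=
    (hPdiff.hasFDerivAt).mul' hstarG
  have h0 : (fderiv ℝ P xs).smulRight (star (G xs)) = 0 := by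
    rw [hGxs, star_zero]
    exact ContinuousLinearMap.ext fun v => by
      rw [ContinuousLinearMap.smulRight_apply, smul_zero, ContinuousLinearMap.zero_apply]
  rw [h0, add_zero] at hprodFD
  have hiotaeq : jnrIota N a lam μ = fun y => imCLM (P y * star (G y)) := rfl
  have hiotaFD : HasFDerivAt (jnrIota N a lam μ)
      (imCLM.comp (P xs • (starCLMQ.comp (quatCLM.comp H))))
      xs := by
    rw [hiotaeq]
    exact (imCLM.hasFDerivAt).comp xs hprodFD
  have hPxs : P xs = ((c : ℝ) : Quaternion ℝ) := by
    show jnrPsi N a lam μ (quatOfVec xs) = ((c : ℝ) : Quaternion ℝ)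
    rw [← hX]
    exact hPsi
  -- the derivative of ι̃ is (-c) • H
  have hfinal : imCLM.comp
      (P xs • (starCLMQ.comp (quatCLM.comp H)))
      = (-c) • H := by
    refine ContinuousLinearMap.ext fun v => ?_
    rw [ContinuousLinearMap.comp_apply, ContinuousLinearMap.smul_apply,
      ContinuousLinearMap.comp_apply, ContinuousLinearMap.comp_apply, starCLMQ_apply,
      quatCLM_apply, hPxs]
    have h2 : star (quatOfVec (H v)) = -(quatOfVec (H v)) := by
      rw [quat_star_eq_neg (quatOfVec_re _)]
    rw [h2]
    have h3 : ((c : ℝ) : Quaternion ℝ) • (-(quatOfVec (H v))) = (-c) • quatOfVec (H v) := by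
      rw [smul_eq_mul, mul_neg, Quaternion.coe_mul_eq_smul, ← neg_smul]
    rw [h3, map_smul, imCLM_apply, imVec_quatOfVec, ContinuousLinearMap.smul_apply]
  have hfd : fderiv ℝ (jnrIota N a lam μ) xs = (-c) • H := by
    rw [← hfinal]
    exact hiotaFD.fderiv
  -- determinant computation
  have hdet : LinearMap.det
      ((fderiv ℝ (jnrIota N a lam μ) xs : (Fin 3 → ℝ) →L[ℝ] (Fin 3 → ℝ)) :
        (Fin 3 → ℝ) →ₗ[ℝ] (Fin 3 → ℝ))
      = (-c) ^ 3 * LinearMap.det ((H : (Fin 3 → ℝ) →L[ℝ] (Fin 3 → ℝ)) :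
          (Fin 3 → ℝ) →ₗ[ℝ] (Fin 3 → ℝ)) := by
    rw [hfd]
    have hcoe : (((-c) • H : (Fin 3 → ℝ) →L[ℝ] (Fin 3 → ℝ)) :
        (Fin 3 → ℝ) →ₗ[ℝ] (Fin 3 → ℝ)) = (-c) • (H : (Fin 3 → ℝ) →ₗ[ℝ] (Fin 3 → ℝ)) := rfl
    rw [hcoe, LinearMap.det_smul]
    norm_num [Module.finrank_pi]
  set D : ℝ := LinearMap.det ((H : (Fin 3 → ℝ) →L[ℝ] (Fin 3 → ℝ)) :
      (Fin 3 → ℝ) →ₗ[ℝ] (Fin 3 → ℝ)) with hD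
  have hc3 : (-c) ^ 3 = -(c ^ 3) := by ring
  have hc3neg : -(c ^ 3) < 0 := neg_neg_iff_pos.mpr (pow_pos hcpos 3)
  rw [hdet, hc3]
  rcases lt_or_gt_of_ne hnondeg with hDneg | hDpos
  · have hpos : 0 < -(c ^ 3) * D := mul_pos_of_neg_of_neg hc3neg hDneg
    refine ⟨?_, ne_of_gt hpos⟩
    rw [Real.sign_of_pos hpos, Real.sign_of_neg hDneg]
    norm_num
  · have hneg : -(c ^ 3) * D < 0 := mul_neg_of_neg_of_pos hc3neg hDpos
    refine ⟨?_, ne_of_lt hneg⟩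
    rw [Real.sign_of_neg hneg, Real.sign_of_pos hDpos]
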